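/- If a class [C] ∈ 𝔗^U_K is comparable with respect to ≤ both to the class [C_O] and to the class [C_E] (that is, for each of [C_O] and [C_E] there exists an almost ι_K-local map between C and the corresponding complex in at least one direction), then [C] has infinite order in the group 𝔗^U_K. -/

import Mathlib

/-!
Algebraic model for horizontal almost `ι_K`-complexes (Kang–Park,
"Torsion in the knot concordance group and cabling").

Conventions.  We work over `F₂ = ℤ/2`.  A bigraded chain complex of finitely
generated free `F₂[U]`-modules is presented by a finite homogeneous basis
`idx`, a bidegree function `gr : idx → ℤ × ℤ` (Alexander and Maslov gradings),
and a differential matrix `d` over `F₂[U]` (the `j`-th basis vector is sent to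
`∑ i, d i j • eᵢ`; matrix multiplication is composition).  The variable `U`
has bidegree `(−1, −2)` and the differential has bidegree `(0, −1)`.
-/

open Polynomial Matrix Kronecker

noncomputable section

/-- The field with two elements. -/
abbrev F2 : Type := ZMod 2

/-- The ring `F₂[U]`. -/
abbrev PolyU : Type := Polynomial F2

/-- The ring `F₂[U, U⁻¹]`. -/
abbrev Laur : Type := LaurentPolynomial F2

/-- The localization map `F₂[U] → F₂[U, U⁻¹]`. -/
def toL : PolyU →+* Laur := Polynomial.toLaurent

/-- The skew of a bidegree: `(A, M) ↦ (−A, M)`. -/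
def skew (p : ℤ × ℤ) : ℤ × ℤ := (-p.1, p.2)

/-- Data of a bigraded complex of finitely generated free `F₂[U]`-modules. -/
structure CxData where
  idx : Type
  [fintype_idx : Fintype idx]
  [dec_idx : DecidableEq idx]
  gr : idx → ℤ × ℤ
  d : Matrix idx idx PolyU

attribute [instance] CxData.fintype_idx CxData.dec_idx

/-- The `U = 0` (hat-flavored) truncation of a matrix over `F₂[U]`. -/
def hatM {m n : Type} (f : Matrix m n PolyU) : Matrix m n F2 :=
  fun i j => (f i j).coeff 0

/-- `f` is a homogeneous `F₂[U]`-linear map of bidegree `δ` from `C` to `D`: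
a monomial `U^k` appearing in the entry `(i, j)` forces
`gr i + k • (−1, −2) = gr j + δ`. -/
def GradedMap (C D : CxData) (δ : ℤ × ℤ) (f : Matrix D.idx C.idx PolyU) : Prop :=
  ∀ (i : D.idx) (j : C.idx) (k : ℕ), (f i j).coeff k ≠ 0 →
    D.gr i + (-(k : ℤ), -2 * (k : ℤ)) = C.gr j + δ

/-- An element (column vector) of `C` is homogeneous of bidegree `δ`. -/
def Homog (C : CxData) (δ : ℤ × ℤ) (v : Matrix C.idx Unit PolyU) : Prop :=
  ∀ (i : C.idx) (k : ℕ), (v i ()).coeff k ≠ 0 →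
    C.gr i + (-(k : ℤ), -2 * (k : ℤ)) = δ

namespace CxData

/-- `C` is a bigraded chain complex: `∂² = 0` and `∂` has bidegree `(0, −1)`. -/
def IsComplex (C : CxData) : Prop :=
  C.d * C.d = 0 ∧ GradedMap C C (0, -1) C.d

/-- The formal derivative `Φ` of the differential with respect to `U`. -/
def Phi (C : CxData) : Matrix C.idx C.idx PolyU :=
  fun i j => derivative (C.d i j)

/-- The induced differential on the truncation `Ĉ = C/UC`. -/
def dHat (C : CxData) : Matrix C.idx C.idx F2 := hatM C.d

/-- The truncation of `Φ` to `Ĉ`. -/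
def PhiHat (C : CxData) : Matrix C.idx C.idx F2 := hatM C.Phi

/-- The localized differential, over `F₂[U, U⁻¹]`. -/
def dL (C : CxData) : Matrix C.idx C.idx Laur := C.d.map toL

end CxData

/-- Chain homotopy (everything is mod 2) between maps `Ĉ → D̂` of truncations. -/
def HatHomotopic (C D : CxData) (f g : Matrix D.idx C.idx F2) : Prop :=
  ∃ H : Matrix D.idx C.idx F2, f + g = D.dHat * H + H * C.dHat

/-- Chain homotopy between maps `C → D` over `F₂[U]`. -/
def Homotopic (C D : CxData) (f g : Matrix D.idx C.idx PolyU) : Prop :=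
  ∃ H : Matrix D.idx C.idx PolyU, f + g = D.d * H + H * C.d

/-- Chain homotopy between maps `U⁻¹C → U⁻¹D` over `F₂[U, U⁻¹]`. -/
def LHomotopic (C D : CxData) (f g : Matrix D.idx C.idx Laur) : Prop :=
  ∃ H : Matrix D.idx C.idx Laur, f + g = D.dL * H + H * C.dL

/-- A matrix on the truncation `Ĉ` is skew-graded: each nonzero entry takes
bidegree `(A, M)` to `(−A, M)`. -/
def SkewGraded (C : CxData) (f : Matrix C.idx C.idx F2) : Prop :=
  ∀ i j, f i j ≠ 0 → C.gr i = skew (C.gr j)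

/-- `f` is a chain homotopy equivalence of the truncation `Ĉ`. -/
def HatHomotopyEquiv (C : CxData) (f : Matrix C.idx C.idx F2) : Prop :=
  f * C.dHat = C.dHat * f ∧
  ∃ g : Matrix C.idx C.idx F2, g * C.dHat = C.dHat * g ∧
    HatHomotopic C C (g * f) 1 ∧ HatHomotopic C C (f * g) 1

/-- The localization `U⁻¹C` is chain homotopy equivalent to `F₂[U, U⁻¹]`
(one generator, zero differential). -/
def LocalizationTrivial (C : CxData) : Prop :=
  ∃ (f : Matrix Unit C.idx Laur) (g : Matrix C.idx Unit Laur),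
    f * C.dL = 0 ∧ C.dL * g = 0 ∧ f * g = 1 ∧
    ∃ H : Matrix C.idx C.idx Laur, 1 + g * f = C.dL * H + H * C.dL

/-- The homology class of the cycle `x` generates the homology of `U⁻¹C`:
the chain map `F₂[U,U⁻¹] → U⁻¹C` sending the generator to `x` is a chain
homotopy equivalence. -/
def GeneratesLocalHomology (C : CxData) (x : Matrix C.idx Unit PolyU) : Prop :=
  C.dL * x.map toL = 0 ∧
  ∃ p : Matrix Unit C.idx Laur, p * C.dL = 0 ∧ p * x.map toL = 1 ∧
    ∃ H : Matrix C.idx C.idx Laur, 1 + x.map toL * p = C.dL * H + H * C.dL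

/-- A pair as in Definition 2.4: a complex together with an involution of the
hat-flavored truncation. -/
structure Hor where
  C : CxData
  iota : Matrix C.idx C.idx F2

/-- `(C, ι)` is a horizontal almost `ι_K`-complex. -/
def IsHorizontal (X : Hor) : Prop :=
  X.C.IsComplex ∧
  LocalizationTrivial X.C ∧
  HatHomotopyEquiv X.C X.iota ∧
  SkewGraded X.C X.iota ∧
  HatHomotopic X.C X.C (X.C.PhiHat * X.iota * X.C.PhiHat * X.iota)
    (X.iota * X.C.PhiHat * X.iota * X.C.PhiHat) ∧
  HatHomotopic X.C X.C (X.iota * X.iota)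
    (1 + X.C.PhiHat * X.iota * X.C.PhiHat * X.iota) ∧
  ∃ f : Matrix X.C.idx X.C.idx PolyU, f * X.C.d = X.C.d * f ∧
    HatHomotopic X.C X.C (hatM f) (X.iota * X.C.PhiHat * X.iota)

/-- The localization `U⁻¹f` of `f` is a chain homotopy equivalence. -/
def LocalizedHomotopyEquiv (C D : CxData) (f : Matrix D.idx C.idx PolyU) : Prop :=
  ∃ g : Matrix C.idx D.idx Laur,
    g * D.dL = C.dL * g ∧
    LHomotopic C C (g * f.map toL) 1 ∧
    LHomotopic D D (f.map toL * g) 1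

/-- An almost `ι_K`-local map from `(C, ι_C)` to `(D, ι_D)`: a bidegree
preserving `F₂[U]`-linear chain map whose localization is a chain homotopy
equivalence and whose truncation homotopy-commutes with the involutions. -/
def AlmostLocalMap (X Y : Hor) (f : Matrix Y.C.idx X.C.idx PolyU) : Prop :=
  GradedMap X.C Y.C (0, 0) f ∧
  f * X.C.d = Y.C.d * f ∧
  LocalizedHomotopyEquiv X.C Y.C f ∧
  HatHomotopic X.C Y.C (Y.iota * hatM f) (hatM f * X.iota)

/-- `X ≤ Y`: there is an almost `ι_K`-local map from `X` to `Y`. -/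
def Le (X Y : Hor) : Prop := ∃ f, AlmostLocalMap X Y f

/-- Almost `ι_K`-local equivalence. -/
def AlmostLocalEquiv (X Y : Hor) : Prop := Le X Y ∧ Le Y X

/-- The tensor product over `F₂[U]` of two complexes. -/
def tensorCx (C D : CxData) : CxData where
  idx := C.idx × D.idx
  gr := fun p => C.gr p.1 + D.gr p.2
  d := C.d ⊗ₖ (1 : Matrix D.idx D.idx PolyU) + (1 : Matrix C.idx C.idx PolyU) ⊗ₖ D.d

/-- The tensor product of pairs, with `ι_{C⊗D} = ι_C ⊗ ι_D + Φι_C ⊗ ι_D Φ`. -/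
def tensorHor (X Y : Hor) : Hor where
  C := tensorCx X.C Y.C
  iota := X.iota ⊗ₖ Y.iota + (X.C.PhiHat * X.iota) ⊗ₖ (Y.iota * Y.C.PhiHat)

/-- The trivial complex `C_O = F₂[U]`, generator in bidegree `(0,0)`, zero
differential, identity involution. -/
def CO : Hor where
  C := { idx := Unit, gr := fun _ => (0, 0), d := 0 }
  iota := 1

/-- The complex `C_E` of the figure-eight knot: generators `a, b, c, d, x`
(indices `0, 1, 2, 3, 4`), with `a, x` in bidegree `(0,0)`, differential
`∂a = Ub`, `∂c = Ud`, `∂b = ∂d = ∂x = 0`, and involution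
`ι(a) = a + x`, `ι(b) = c`, `ι(c) = b`, `ι(d) = d`, `ι(x) = x + d`. -/
def CE : Hor where
  C := { idx := Fin 5
         gr := ![(0, 0), (1, 1), (-1, 1), (0, 2), (0, 0)]
         d := !![0, 0, 0, 0, 0;
                 Polynomial.X, 0, 0, 0, 0;
                 0, 0, 0, 0, 0;
                 0, 0, Polynomial.X, 0, 0;
                 0, 0, 0, 0, 0] }
  iota := !![1, 0, 0, 0, 0;
             0, 0, 1, 0, 0;
             0, 1, 0, 0, 0;
             0, 0, 0, 1, 1;
             1, 0, 0, 0, 1]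

/-- The complex `C_n`: generators `a_n, b_n, c_n, d_n, x_n` (indices
`0, …, 4`), `a_n, x_n` in bidegree `(0,0)`, differential `∂a_n = Uⁿ b_n`,
`∂c_n = Uⁿ d_n`, and involution `ι(a_n) = a_n + x_n`, `ι(b_n) = c_n`,
`ι(c_n) = b_n`, `ι(d_n) = d_n`, `ι(x_n) = x_n`. -/
def Cn (n : ℕ) : Hor where
  C := { idx := Fin 5
         gr := ![(0, 0), ((n : ℤ), 2 * (n : ℤ) - 1), (-(n : ℤ), 2 * (n : ℤ) - 1),
                 (0, 4 * (n : ℤ) - 2), (0, 0)]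
         d := !![0, 0, 0, 0, 0;
                 Polynomial.X ^ n, 0, 0, 0, 0;
                 0, 0, 0, 0, 0;
                 0, 0, Polynomial.X ^ n, 0, 0;
                 0, 0, 0, 0, 0] }
  iota := !![1, 0, 0, 0, 0;
             0, 0, 1, 0, 0;
             0, 1, 0, 0, 0;
             0, 0, 0, 1, 0;
             1, 0, 0, 0, 1]

/-- The dual complex `C* = Hom_{F₂[U]}(C, F₂[U])`: dual basis, negated
gradings, transposed differential. -/
def dualCx (C : CxData) : CxData where
  idx := C.idx
  gr := fun i => -C.gr i
  d := C.dᵀ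

/-- The dual pair `(C*, ι*)`. -/
def dualHor (X : Hor) : Hor where
  C := dualCx X.C
  iota := X.iotaᵀ

/-- `n`-fold tensor power (`0` gives the trivial complex `C_O`). -/
def tensorPow (X : Hor) : ℕ → Hor
  | 0 => CO
  | n + 1 => tensorHor (tensorPow X n) X

/-- The trace map `tr : C ⊗ C* → F₂[U]`. -/
def trMap (C : CxData) : Matrix Unit (C.idx × C.idx) PolyU :=
  fun _ p => if p.1 = p.2 then 1 else 0

/-- The cotrace map `cotr : F₂[U] → C ⊗ C*`. -/
def cotrMap (C : CxData) : Matrix (C.idx × C.idx) Unit PolyU :=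
  fun p _ => if p.1 = p.2 then 1 else 0


set_option linter.unusedSectionVars false
set_option synthInstance.maxHeartbeats 1000000
set_option maxHeartbeats 1000000
set_option linter.unusedVariables false
namespace KP

open Polynomial Matrix Kronecker

variable {R S : Type} [CommRing R] [CommRing S]
variable {l m n p q : Type} [Fintype l] [Fintype m] [Fintype n] [Fintype p] [Fintype q]

lemma two_eq_zero [Algebra F2 R] : (2 : R) = 0 := by
  have h : (algebraMap F2 R) 2 = 2 := map_ofNat _ 2
  have h2 : (2 : F2) = 0 := by decide
  rw [h2] at h
  simpa using h.symm

lemma addSelf [Algebra F2 R] (A : Matrix m n R) : A + A = 0 := by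
  ext i j
  show A i j + A i j = 0
  rw [← two_mul, two_eq_zero, zero_mul]

lemma cancel2 [Algebra F2 R] {A B : Matrix m n R} (h : A + B = 0) : A = B := by
  calc A = A + (B + B) := by rw [addSelf, add_zero]
  _ = (A + B) + B := by abel
  _ = B := by rw [h, zero_add]

/-- Abstract homotopy relation. -/
def Ht (dD : Matrix m m R) (dC : Matrix n n R) (f g : Matrix m n R) : Prop :=
  ∃ H : Matrix m n R, f + g = dD * H + H * dC

lemma Ht.of_eq {dD : Matrix m m R} {dC : Matrix n n R} {f g : Matrix m n R}
    [Algebra F2 R] (h : f = g) : Ht dD dC f g :=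
  ⟨0, by simp [h, addSelf]⟩

lemma Ht.refl {dD : Matrix m m R} {dC : Matrix n n R} (f : Matrix m n R)
    [Algebra F2 R] : Ht dD dC f f := Ht.of_eq rfl

lemma Ht.symm {dD : Matrix m m R} {dC : Matrix n n R} {f g : Matrix m n R}
    (h : Ht dD dC f g) : Ht dD dC g f := by
  obtain ⟨H, hH⟩ := h
  exact ⟨H, by rw [add_comm]; exact hH⟩

lemma Ht.trans {dD : Matrix m m R} {dC : Matrix n n R} {f g h : Matrix m n R}
    [Algebra F2 R] (h1 : Ht dD dC f g) (h2 : Ht dD dC g h) : Ht dD dC f h := by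
  obtain ⟨H1, e1⟩ := h1; obtain ⟨H2, e2⟩ := h2
  refine ⟨H1 + H2, ?_⟩
  have : f + h = (f + g) + (g + h) := by
    have hg := addSelf g
    calc f + h = (f + h) + (g + g) := by rw [hg, add_zero]
    _ = (f + g) + (g + h) := by abel
  rw [this, e1, e2, Matrix.mul_add, Matrix.add_mul]; abel

lemma Ht.mulLeft {dD : Matrix m m R} {dC : Matrix n n R} {f g : Matrix m n R}
    {dE : Matrix p p R} (P : Matrix p m R) (hP : P * dD = dE * P)
    (h : Ht dD dC f g) : Ht dE dC (P * f) (P * g) := by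
  obtain ⟨H, hH⟩ := h
  refine ⟨P * H, ?_⟩
  rw [← Matrix.mul_add, hH, Matrix.mul_add, ← Matrix.mul_assoc, ← Matrix.mul_assoc, hP,
    Matrix.mul_assoc]

lemma Ht.mulRight {dD : Matrix m m R} {dC : Matrix n n R} {f g : Matrix m n R}
    {dE : Matrix q q R} (P : Matrix n q R) (hP : dC * P = P * dE)
    (h : Ht dD dC f g) : Ht dD dE (f * P) (g * P) := by
  obtain ⟨H, hH⟩ := h
  refine ⟨H * P, ?_⟩
  rw [← Matrix.add_mul, hH, Matrix.add_mul, Matrix.mul_assoc, Matrix.mul_assoc, hP,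
    ← Matrix.mul_assoc, ← Matrix.mul_assoc]

/-- Kronecker with fixed left factor commuting with the differential. -/
lemma Ht.kronL [Algebra F2 R] {dD : Matrix m m R} {dC : Matrix n n R}
    {f g : Matrix m n R} {mZ : Type} [Fintype mZ] [DecidableEq mZ]
    [DecidableEq m] [DecidableEq n]
    (dZ : Matrix mZ mZ R) (P : Matrix mZ mZ R) (hP : P * dZ = dZ * P)
    (h : Ht dD dC f g) :
    Ht (dZ ⊗ₖ (1 : Matrix m m R) + (1 : Matrix mZ mZ R) ⊗ₖ dD)
       (dZ ⊗ₖ (1 : Matrix n n R) + (1 : Matrix mZ mZ R) ⊗ₖ dC)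
       (P ⊗ₖ f) (P ⊗ₖ g) := by
  obtain ⟨H, hH⟩ := h
  refine ⟨P ⊗ₖ H, ?_⟩
  have e1 : (dZ ⊗ₖ (1 : Matrix m m R) + (1 : Matrix mZ mZ R) ⊗ₖ dD) * (P ⊗ₖ H)
      = (dZ * P) ⊗ₖ H + P ⊗ₖ (dD * H) := by
    rw [Matrix.add_mul, ← mul_kronecker_mul, ← mul_kronecker_mul, Matrix.one_mul, Matrix.one_mul]
  have e2 : (P ⊗ₖ H) * (dZ ⊗ₖ (1 : Matrix n n R) + (1 : Matrix mZ mZ R) ⊗ₖ dC)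
      = (P * dZ) ⊗ₖ H + P ⊗ₖ (H * dC) := by
    rw [Matrix.mul_add, ← mul_kronecker_mul, ← mul_kronecker_mul, Matrix.mul_one, Matrix.mul_one]
  rw [e1, e2, hP]
  have e3 : (dZ * P) ⊗ₖ H + P ⊗ₖ (dD * H) + ((dZ * P) ⊗ₖ H + P ⊗ₖ (H * dC))
      = ((dZ * P) ⊗ₖ H + (dZ * P) ⊗ₖ H) + (P ⊗ₖ (dD * H) + P ⊗ₖ (H * dC)) := by abel
  rw [e3, addSelf, zero_add, ← kronecker_add, ← kronecker_add, hH]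

end KP

section Chunk2
open Polynomial Matrix Kronecker
namespace KP

variable {l m n p q : Type} [Fintype l] [Fintype m] [Fintype n] [Fintype p] [Fintype q]

lemma hatM_eq (f : Matrix m n PolyU) : hatM f = f.map (Polynomial.constantCoeff) := rfl

lemma hatM_mul (A : Matrix m n PolyU) (B : Matrix n p PolyU) :
    hatM (A * B) = hatM A * hatM B := by
  rw [hatM_eq, hatM_eq, hatM_eq, Matrix.map_mul]

lemma hatM_add (A B : Matrix m n PolyU) : hatM (A + B) = hatM A + hatM B := by
  rw [hatM_eq, hatM_eq, hatM_eq]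
  exact Matrix.map_add _ (by simp) A B

lemma hatM_one [DecidableEq m] : hatM (1 : Matrix m m PolyU) = 1 := by
  rw [hatM_eq]; exact Matrix.map_one _ (by simp) (by simp)

lemma hatM_zero : hatM (0 : Matrix m n PolyU) = 0 := by
  ext i j; simp [hatM]

lemma mapKron {R S : Type} [CommRing R] [CommRing S] (f : R →+* S)
    (A : Matrix l m R) (B : Matrix n p R) :
    (A ⊗ₖ B).map f = (A.map f) ⊗ₖ (B.map f) := by
  ext ⟨i, a⟩ ⟨j, b⟩
  simp [Matrix.map_apply, Matrix.kroneckerMap_apply]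

lemma hatM_kron (A : Matrix l m PolyU) (B : Matrix n p PolyU) :
    hatM (A ⊗ₖ B) = hatM A ⊗ₖ hatM B := by
  rw [hatM_eq, hatM_eq, hatM_eq]; exact mapKron _ A B

lemma mL_mul (A : Matrix m n PolyU) (B : Matrix n p PolyU) :
    (A * B).map toL = A.map toL * B.map toL := Matrix.map_mul

lemma mL_add (A B : Matrix m n PolyU) :
    (A + B).map toL = A.map toL + B.map toL := Matrix.map_add _ (by simp) A B

lemma mL_one [DecidableEq m] : (1 : Matrix m m PolyU).map toL = 1 :=
  Matrix.map_one _ (by simp) (by simp)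

lemma mL_zero : (0 : Matrix m n PolyU).map toL = 0 := by
  ext i j; simp [toL]

lemma mL_kron (A : Matrix l m PolyU) (B : Matrix n p PolyU) :
    (A ⊗ₖ B).map toL = (A.map toL) ⊗ₖ (B.map toL) := mapKron _ A B

/-- Entrywise formal derivative. -/
def derivM (A : Matrix m n PolyU) : Matrix m n PolyU :=
  fun i j => Polynomial.derivative (A i j)

lemma derivM_mul (A : Matrix m n PolyU) (B : Matrix n p PolyU) :
    derivM (A * B) = derivM A * B + A * derivM B := by
  ext i j
  simp only [derivM, Matrix.mul_apply, Matrix.add_apply, map_sum,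
    Polynomial.derivative_mul]
  rw [← Finset.sum_add_distrib]

lemma derivM_zero : derivM (0 : Matrix m n PolyU) = 0 := by
  ext i j; simp [derivM]

-- bridges
lemma dHat_def (C : CxData) : C.dHat = hatM C.d := rfl

lemma chain_hat {C D : CxData} {f : Matrix D.idx C.idx PolyU}
    (h : f * C.d = D.d * f) : hatM f * C.dHat = D.dHat * hatM f := by
  rw [dHat_def, dHat_def, ← hatM_mul, ← hatM_mul, h]

lemma PhiHat_hat (C : CxData) : C.PhiHat = hatM (derivM C.d) := rfl

lemma PhiHat_comm {C : CxData} (h : C.d * C.d = 0) :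
    C.PhiHat * C.dHat = C.dHat * C.PhiHat := by
  have h1 : derivM (C.d * C.d) = 0 := by rw [h, derivM_zero]
  rw [derivM_mul] at h1
  have h2 : derivM C.d * C.d = C.d * derivM C.d := cancel2 h1
  rw [PhiHat_hat, dHat_def, ← hatM_mul, h2, hatM_mul]

/-- `Φ` is natural with respect to chain maps, up to explicit homotopy. -/
lemma Phi_natural {C D : CxData} {f : Matrix D.idx C.idx PolyU}
    (h : f * C.d = D.d * f) :
    Ht D.dHat C.dHat (hatM f * C.PhiHat) (D.PhiHat * hatM f) := by
  refine ⟨hatM (derivM f), ?_⟩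
  have h1 : derivM (f * C.d) = derivM (D.d * f) := by rw [h]
  rw [derivM_mul, derivM_mul] at h1
  have key : f * derivM C.d + derivM D.d * f
      = D.d * derivM f + derivM f * C.d := by
    apply cancel2
    rw [show f * derivM C.d + derivM D.d * f + (D.d * derivM f + derivM f * C.d)
        = (derivM f * C.d + f * derivM C.d) + (derivM D.d * f + D.d * derivM f) from by abel,
      h1]
    exact addSelf _
  rw [PhiHat_hat, PhiHat_hat, dHat_def, dHat_def,
    ← hatM_mul, ← hatM_mul, ← hatM_mul, ← hatM_mul, ← hatM_add, ← hatM_add, key]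

end KP
end Chunk2

section Chunk3
open Polynomial Matrix Kronecker
namespace KP

variable {l m n p q : Type} [Fintype l] [Fintype m] [Fintype n] [Fintype p] [Fintype q]

lemma Ht.congr {R : Type} [CommRing R] {dD : Matrix m m R} {dC : Matrix n n R}
    {f g f' g' : Matrix m n R} (h : Ht dD dC f g) (e1 : f = f') (e2 : g = g') :
    Ht dD dC f' g' := e1 ▸ e2 ▸ h

lemma Ht.add {R : Type} [CommRing R] {dD : Matrix m m R} {dC : Matrix n n R}
    {f g f' g' : Matrix m n R} (h : Ht dD dC f g) (h' : Ht dD dC f' g') :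
    Ht dD dC (f + f') (g + g') := by
  obtain ⟨H, hH⟩ := h; obtain ⟨H', hH'⟩ := h'
  refine ⟨H + H', ?_⟩
  rw [show f + f' + (g + g') = (f + g) + (f' + g') from by abel, hH, hH',
    Matrix.mul_add, Matrix.add_mul]
  abel

/-- The key structural invariant we track through tensor powers. -/
def Good (X : Hor) : Prop :=
  X.C.d * X.C.d = 0 ∧ X.iota * X.C.dHat = X.C.dHat * X.iota

lemma CO_d : CO.C.d = 0 := rfl

lemma CO_dHat : CO.C.dHat = 0 := by
  show hatM (0 : Matrix Unit Unit PolyU) = 0; exact hatM_zero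

lemma CO_PhiHat : CO.C.PhiHat = 0 := by
  show hatM (derivM (0 : Matrix Unit Unit PolyU)) = 0; rw [derivM_zero, hatM_zero]

lemma good_CO : Good CO := by
  constructor
  · rw [CO_d, Matrix.mul_zero]
  · rw [CO_dHat, Matrix.mul_zero, Matrix.zero_mul]

lemma good_X {X : Hor} (hX : IsHorizontal X) : Good X :=
  ⟨hX.1.1, hX.2.2.1.1⟩

lemma tensor_gr (C D : CxData) (i : C.idx) (a : D.idx) :
    (tensorCx C D).gr (i, a) = C.gr i + D.gr a := rfl

lemma tensor_dHat (C D : CxData) :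
    hatM (C.d ⊗ₖ (1 : Matrix D.idx D.idx PolyU)
      + (1 : Matrix C.idx C.idx PolyU) ⊗ₖ D.d)
    = C.dHat ⊗ₖ (1 : Matrix D.idx D.idx F2)
      + (1 : Matrix C.idx C.idx F2) ⊗ₖ D.dHat := by
  rw [hatM_add, hatM_kron, hatM_kron, hatM_one, hatM_one, dHat_def, dHat_def]

lemma tensor_dL (C D : CxData) :
    (C.d ⊗ₖ (1 : Matrix D.idx D.idx PolyU)
      + (1 : Matrix C.idx C.idx PolyU) ⊗ₖ D.d).map toL
    = C.dL ⊗ₖ (1 : Matrix D.idx D.idx Laur)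
      + (1 : Matrix C.idx C.idx Laur) ⊗ₖ D.dL := by
  rw [mL_add, mL_kron, mL_kron, mL_one, mL_one]
  rfl

lemma good_tensor {A B : Hor} (hA : Good A) (hB : Good B) :
    Good (tensorHor A B) := by
  have c1 : A.iota * hatM A.C.d = hatM A.C.d * A.iota := hA.2
  have c2 : B.iota * hatM B.C.d = hatM B.C.d * B.iota := hB.2
  constructor
  · show (A.C.d ⊗ₖ (1 : Matrix B.C.idx B.C.idx PolyU)
        + (1 : Matrix A.C.idx A.C.idx PolyU) ⊗ₖ B.C.d)
      * (A.C.d ⊗ₖ (1 : Matrix B.C.idx B.C.idx PolyU)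
        + (1 : Matrix A.C.idx A.C.idx PolyU) ⊗ₖ B.C.d) = 0
    rw [Matrix.add_mul, Matrix.mul_add, Matrix.mul_add,
      ← mul_kronecker_mul, ← mul_kronecker_mul, ← mul_kronecker_mul,
      ← mul_kronecker_mul]
    simp only [Matrix.one_mul, Matrix.mul_one]
    rw [hA.1, hB.1, zero_kronecker, kronecker_zero, zero_add, add_zero]
    exact addSelf _
  · show (A.iota ⊗ₖ B.iota + (A.C.PhiHat * A.iota) ⊗ₖ (B.iota * B.C.PhiHat))
        * hatM (A.C.d ⊗ₖ (1 : Matrix B.C.idx B.C.idx PolyU)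
          + (1 : Matrix A.C.idx A.C.idx PolyU) ⊗ₖ B.C.d)
      = hatM (A.C.d ⊗ₖ (1 : Matrix B.C.idx B.C.idx PolyU)
          + (1 : Matrix A.C.idx A.C.idx PolyU) ⊗ₖ B.C.d)
        * (A.iota ⊗ₖ B.iota + (A.C.PhiHat * A.iota) ⊗ₖ (B.iota * B.C.PhiHat))
    rw [tensor_dHat]
    have p1 : A.C.PhiHat * A.C.dHat = A.C.dHat * A.C.PhiHat := PhiHat_comm hA.1
    have p2 : B.C.PhiHat * B.C.dHat = B.C.dHat * B.C.PhiHat := PhiHat_comm hB.1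
    have e1 : A.C.PhiHat * A.iota * A.C.dHat = A.C.dHat * (A.C.PhiHat * A.iota) := by
      rw [Matrix.mul_assoc, hA.2, ← Matrix.mul_assoc, p1, Matrix.mul_assoc]
    have e2 : B.iota * B.C.PhiHat * B.C.dHat = B.C.dHat * (B.iota * B.C.PhiHat) := by
      rw [Matrix.mul_assoc, p2, ← Matrix.mul_assoc, hB.2, Matrix.mul_assoc]
    simp only [Matrix.add_mul, Matrix.mul_add, ← mul_kronecker_mul,
      Matrix.one_mul, Matrix.mul_one]
    rw [hA.2, hB.2, e1, e2]
    abel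

lemma good_pow {X : Hor} (hX : Good X) : ∀ k, Good (tensorPow X k)
  | 0 => good_CO
  | (k+1) => good_tensor (good_pow hX k) hX

/-- Composition of graded maps of bidegree `(0,0)`. -/
lemma graded_comp {C D E : CxData} {f : Matrix D.idx C.idx PolyU}
    {g : Matrix E.idx D.idx PolyU} (hf : GradedMap C D (0, 0) f)
    (hg : GradedMap D E (0, 0) g) : GradedMap C E (0, 0) (g * f) := by
  intro i j k hk
  rw [Matrix.mul_apply] at hk
  have hk' : (∑ a, (g i a * f a j)).coeff k ≠ 0 := hk
  rw [Polynomial.finset_sum_coeff] at hk'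
  obtain ⟨a, -, ha⟩ := Finset.exists_ne_zero_of_sum_ne_zero hk'
  rw [Polynomial.coeff_mul] at ha
  obtain ⟨x, hx, hxne⟩ := Finset.exists_ne_zero_of_sum_ne_zero ha
  rw [Finset.HasAntidiagonal.mem_antidiagonal] at hx
  have h1 := hg i a x.1 (fun h => hxne (by rw [h, zero_mul]))
  have h2 := hf a j x.2 (fun h => hxne (by rw [h, mul_zero]))
  rw [Prod.ext_iff] at h1 h2 ⊢
  simp only [Prod.fst_add, Prod.snd_add] at h1 h2 ⊢
  obtain ⟨h1a, h1b⟩ := h1; obtain ⟨h2a, h2b⟩ := h2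
  subst hx
  constructor <;> (push_cast at h1a h1b h2a h2b ⊢; omega)

lemma graded_one (C : CxData) : GradedMap C C (0, 0) 1 := by
  intro i j k hk
  rw [Matrix.one_apply] at hk
  by_cases h : i = j
  · subst h
    rw [if_pos rfl, Polynomial.coeff_one] at hk
    by_cases h' : k = 0
    · subst h'; simp
    · rw [if_neg h'] at hk; exact absurd rfl hk
  · rw [if_neg h] at hk; simp at hk

lemma Le.refl (X : Hor) : Le X X := by
  refine ⟨1, graded_one _, by rw [Matrix.one_mul, Matrix.mul_one], ⟨1, ?_, ?_, ?_⟩, ?_⟩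
  · rw [Matrix.one_mul, Matrix.mul_one]
  · exact Ht.of_eq (by rw [mL_one, Matrix.one_mul])
  · exact Ht.of_eq (by rw [mL_one, Matrix.one_mul])
  · exact Ht.of_eq (by rw [hatM_one, Matrix.one_mul, Matrix.mul_one])

lemma Le.trans {X Y Z : Hor} (h1 : Le X Y) (h2 : Le Y Z) : Le X Z := by
  obtain ⟨f, hfg, hfc, ⟨p, hp, hpf, hfp⟩, hfi⟩ := h1
  obtain ⟨g, hgg, hgc, ⟨q, hq, hqg, hgq⟩, hgi⟩ := h2
  have hfL : f.map toL * X.C.dL = Y.C.dL * f.map toL := by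
    show _ * X.C.d.map toL = Y.C.d.map toL * _
    rw [← mL_mul, ← mL_mul, hfc]
  have hgL : g.map toL * Y.C.dL = Z.C.dL * g.map toL := by
    show _ * Y.C.d.map toL = Z.C.d.map toL * _
    rw [← mL_mul, ← mL_mul, hgc]
  refine ⟨g * f, graded_comp hfg hgg, ?_, ⟨p * q, ?_, ?_, ?_⟩, ?_⟩
  · rw [Matrix.mul_assoc, hfc, ← Matrix.mul_assoc, hgc, Matrix.mul_assoc]
  · rw [Matrix.mul_assoc, hq, ← Matrix.mul_assoc, hp, Matrix.mul_assoc]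
  · -- (p*q) * mL (g*f) ≃ 1
    have step1 : Ht X.C.dL Y.C.dL (p * (q * g.map toL)) p :=
      (Ht.mulLeft p hp hqg).congr rfl (by rw [Matrix.mul_one])
    have step2 : Ht X.C.dL X.C.dL (p * (q * g.map toL) * f.map toL) (p * f.map toL) :=
      step1.mulRight (f.map toL) hfL.symm
    have h3 := step2.trans hpf
    refine h3.congr ?_ rfl
    rw [mL_mul]; simp only [Matrix.mul_assoc]
  · -- mL (g*f) * (p*q) ≃ 1
    have step1 : Ht Z.C.dL Y.C.dL (g.map toL * (f.map toL * p)) (g.map toL) :=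
      (Ht.mulLeft (g.map toL) hgL hfp).congr rfl (by rw [Matrix.mul_one])
    have step2 : Ht Z.C.dL Z.C.dL (g.map toL * (f.map toL * p) * q) (g.map toL * q) :=
      step1.mulRight q hq.symm
    have h3 := step2.trans hgq
    refine h3.congr ?_ rfl
    rw [mL_mul]; simp only [Matrix.mul_assoc]
  · -- iota condition
    have hfh : hatM f * X.C.dHat = Y.C.dHat * hatM f := chain_hat hfc
    have hgh : hatM g * Y.C.dHat = Z.C.dHat * hatM g := chain_hat hgc
    have s1 : Ht Z.C.dHat X.C.dHat (Z.iota * hatM g * hatM f) (hatM g * Y.iota * hatM f) :=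
      Ht.mulRight (hatM f) hfh.symm hgi
    have s2 : Ht Z.C.dHat X.C.dHat (hatM g * (Y.iota * hatM f)) (hatM g * (hatM f * X.iota)) :=
      Ht.mulLeft (hatM g) hgh hfi
    have h3 := s1.trans (s2.congr (by simp only [Matrix.mul_assoc]) rfl)
    refine h3.congr ?_ ?_
    · rw [hatM_mul]; simp only [Matrix.mul_assoc]
    · rw [hatM_mul]; simp only [Matrix.mul_assoc]

/-- Monotonicity of `≤` under tensoring on the left with a good complex. -/
lemma mono_second {A B : Hor} (Z : Hor) (hZ : Good Z) (hB : Good B)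
    (hAd : A.C.d * A.C.d = 0) {f : Matrix B.C.idx A.C.idx PolyU}
    (hf : AlmostLocalMap A B f) :
    AlmostLocalMap (tensorHor Z A) (tensorHor Z B)
      ((1 : Matrix Z.C.idx Z.C.idx PolyU) ⊗ₖ f) := by
  obtain ⟨hfg, hfc, ⟨p, hp, hpf, hfp⟩, hfi⟩ := hf
  have hPZ : (Z.C.PhiHat * Z.iota) * Z.C.dHat = Z.C.dHat * (Z.C.PhiHat * Z.iota) := by
    rw [Matrix.mul_assoc, hZ.2, ← Matrix.mul_assoc, PhiHat_comm hZ.1, Matrix.mul_assoc]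
  refine ⟨?_, ?_, ⟨(1 : Matrix Z.C.idx Z.C.idx Laur) ⊗ₖ p, ?_, ?_, ?_⟩, ?_⟩
  · -- graded
    intro i' j' k hk
    obtain ⟨i, a⟩ := i'
    obtain ⟨j, b⟩ := j'
    rw [Matrix.kroneckerMap_apply] at hk
    by_cases h : i = j
    · subst h
      rw [Matrix.one_apply_eq, one_mul] at hk
      have h2 := hfg a b k hk
      show Z.C.gr i + B.C.gr a + (-(k : ℤ), -2 * (k : ℤ))
        = Z.C.gr i + A.C.gr b + ((0 : ℤ), (0 : ℤ))
      rw [Prod.ext_iff] at h2 ⊢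
      simp only [Prod.fst_add, Prod.snd_add] at h2 ⊢
      obtain ⟨ha, hb⟩ := h2
      constructor <;> omega
    · rw [Matrix.one_apply_ne h, zero_mul] at hk
      simp at hk
  · -- chain map
    show ((1 : Matrix Z.C.idx Z.C.idx PolyU) ⊗ₖ f)
        * (Z.C.d ⊗ₖ (1 : Matrix A.C.idx A.C.idx PolyU)
          + (1 : Matrix Z.C.idx Z.C.idx PolyU) ⊗ₖ A.C.d)
      = (Z.C.d ⊗ₖ (1 : Matrix B.C.idx B.C.idx PolyU)
          + (1 : Matrix Z.C.idx Z.C.idx PolyU) ⊗ₖ B.C.d)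
        * ((1 : Matrix Z.C.idx Z.C.idx PolyU) ⊗ₖ f)
    rw [Matrix.mul_add, Matrix.add_mul, ← mul_kronecker_mul, ← mul_kronecker_mul,
      ← mul_kronecker_mul, ← mul_kronecker_mul]
    simp only [Matrix.one_mul, Matrix.mul_one]
    rw [hfc]
  · -- localized inverse is a chain map
    show ((1 : Matrix Z.C.idx Z.C.idx Laur) ⊗ₖ p)
        * ((Z.C.d ⊗ₖ (1 : Matrix B.C.idx B.C.idx PolyU)
          + (1 : Matrix Z.C.idx Z.C.idx PolyU) ⊗ₖ B.C.d).map toL)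
      = ((Z.C.d ⊗ₖ (1 : Matrix A.C.idx A.C.idx PolyU)
          + (1 : Matrix Z.C.idx Z.C.idx PolyU) ⊗ₖ A.C.d).map toL)
        * ((1 : Matrix Z.C.idx Z.C.idx Laur) ⊗ₖ p)
    rw [tensor_dL, tensor_dL, Matrix.mul_add, Matrix.add_mul,
      ← mul_kronecker_mul, ← mul_kronecker_mul, ← mul_kronecker_mul,
      ← mul_kronecker_mul]
    simp only [Matrix.one_mul, Matrix.mul_one]
    rw [hp]
  · -- g ∘ f ≃ 1
    show Ht ((Z.C.d ⊗ₖ (1 : Matrix A.C.idx A.C.idx PolyU)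
          + (1 : Matrix Z.C.idx Z.C.idx PolyU) ⊗ₖ A.C.d).map toL)
        ((Z.C.d ⊗ₖ (1 : Matrix A.C.idx A.C.idx PolyU)
          + (1 : Matrix Z.C.idx Z.C.idx PolyU) ⊗ₖ A.C.d).map toL)
        (((1 : Matrix Z.C.idx Z.C.idx Laur) ⊗ₖ p)
          * (((1 : Matrix Z.C.idx Z.C.idx PolyU) ⊗ₖ f).map toL)) 1
    rw [tensor_dL]
    have hk := Ht.kronL (mZ := Z.C.idx) Z.C.dL (1 : Matrix Z.C.idx Z.C.idx Laur)
      (by rw [Matrix.one_mul, Matrix.mul_one]) hpf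
    refine hk.congr ?_ ?_
    · rw [mL_kron, mL_one, ← mul_kronecker_mul, Matrix.one_mul]
    · rw [one_kronecker_one]
  · -- f ∘ g ≃ 1
    show Ht ((Z.C.d ⊗ₖ (1 : Matrix B.C.idx B.C.idx PolyU)
          + (1 : Matrix Z.C.idx Z.C.idx PolyU) ⊗ₖ B.C.d).map toL)
        ((Z.C.d ⊗ₖ (1 : Matrix B.C.idx B.C.idx PolyU)
          + (1 : Matrix Z.C.idx Z.C.idx PolyU) ⊗ₖ B.C.d).map toL)
        ((((1 : Matrix Z.C.idx Z.C.idx PolyU) ⊗ₖ f).map toL)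
          * ((1 : Matrix Z.C.idx Z.C.idx Laur) ⊗ₖ p)) 1
    rw [tensor_dL]
    have hk := Ht.kronL (mZ := Z.C.idx) Z.C.dL (1 : Matrix Z.C.idx Z.C.idx Laur)
      (by rw [Matrix.one_mul, Matrix.mul_one]) hfp
    refine hk.congr ?_ ?_
    · rw [mL_kron, mL_one, ← mul_kronecker_mul, Matrix.one_mul]
    · rw [one_kronecker_one]
  · -- iota condition
    have hΦ : Ht B.C.dHat A.C.dHat (hatM f * A.C.PhiHat) (B.C.PhiHat * hatM f) :=
      Phi_natural hfc
    have t1 : Ht B.C.dHat A.C.dHat (B.iota * B.C.PhiHat * hatM f)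
        (B.iota * (hatM f * A.C.PhiHat)) :=
      ((Ht.mulLeft B.iota hB.2 hΦ).symm).congr (by simp only [Matrix.mul_assoc]) rfl
    have t2 : Ht B.C.dHat A.C.dHat (B.iota * (hatM f * A.C.PhiHat))
        (hatM f * A.iota * A.C.PhiHat) := by
      have h4 := Ht.mulRight A.C.PhiHat (PhiHat_comm hAd).symm hfi
      exact h4.congr (by simp only [Matrix.mul_assoc]) rfl
    have t3 : Ht B.C.dHat A.C.dHat (B.iota * B.C.PhiHat * hatM f)
        (hatM f * (A.iota * A.C.PhiHat)) :=
      (t1.trans t2).congr rfl (by simp only [Matrix.mul_assoc])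
    have k1 := Ht.kronL (mZ := Z.C.idx) Z.C.dHat Z.iota hZ.2 hfi
    have k2 := Ht.kronL (mZ := Z.C.idx) Z.C.dHat (Z.C.PhiHat * Z.iota) hPZ t3
    have hadd := k1.add k2
    show Ht (hatM (Z.C.d ⊗ₖ (1 : Matrix B.C.idx B.C.idx PolyU)
          + (1 : Matrix Z.C.idx Z.C.idx PolyU) ⊗ₖ B.C.d))
      (hatM (Z.C.d ⊗ₖ (1 : Matrix A.C.idx A.C.idx PolyU)
          + (1 : Matrix Z.C.idx Z.C.idx PolyU) ⊗ₖ A.C.d))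
      ((Z.iota ⊗ₖ B.iota + (Z.C.PhiHat * Z.iota) ⊗ₖ (B.iota * B.C.PhiHat))
        * hatM ((1 : Matrix Z.C.idx Z.C.idx PolyU) ⊗ₖ f))
      (hatM ((1 : Matrix Z.C.idx Z.C.idx PolyU) ⊗ₖ f)
        * (Z.iota ⊗ₖ A.iota + (Z.C.PhiHat * Z.iota) ⊗ₖ (A.iota * A.C.PhiHat)))
    rw [tensor_dHat, tensor_dHat]
    have hhat : hatM ((1 : Matrix Z.C.idx Z.C.idx PolyU) ⊗ₖ f)
        = (1 : Matrix Z.C.idx Z.C.idx F2) ⊗ₖ hatM f := by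
      rw [hatM_kron, hatM_one]
    refine hadd.congr ?_ ?_
    · rw [hhat, Matrix.add_mul, ← mul_kronecker_mul, ← mul_kronecker_mul,
        Matrix.mul_one, Matrix.mul_one, Matrix.mul_assoc]
    · rw [hhat, Matrix.mul_add, ← mul_kronecker_mul, ← mul_kronecker_mul,
        Matrix.one_mul, Matrix.one_mul]

end KP
end Chunk3

section Chunk4
open Polynomial Matrix Kronecker
namespace KP

variable {R : Type} [CommRing R]
variable {n : Type} [Fintype n] [DecidableEq n]

def unitR (R : Type) [CommRing R] (n : Type) [DecidableEq n] :
    Matrix (n × Unit) n R := fun p j => if p.1 = j then 1 else 0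

def counitR (R : Type) [CommRing R] (n : Type) [DecidableEq n] :
    Matrix n (n × Unit) R := fun i p => if i = p.1 then 1 else 0

def unitL (R : Type) [CommRing R] (n : Type) [DecidableEq n] :
    Matrix (Unit × n) n R := fun p j => if p.2 = j then 1 else 0

def counitL (R : Type) [CommRing R] (n : Type) [DecidableEq n] :
    Matrix n (Unit × n) R := fun i p => if i = p.2 then 1 else 0

lemma unitR_comm (M : Matrix n n R) :
    (M ⊗ₖ (1 : Matrix Unit Unit R)) * unitR R n = unitR R n * M := by
  ext p j
  obtain ⟨i, u⟩ := p
  simp [Matrix.mul_apply, unitR, Matrix.kroneckerMap_apply, Fintype.sum_prod_type,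
    Matrix.one_apply]

lemma counitR_comm (M : Matrix n n R) :
    counitR R n * (M ⊗ₖ (1 : Matrix Unit Unit R)) = M * counitR R n := by
  ext i p
  obtain ⟨j, u⟩ := p
  simp [Matrix.mul_apply, counitR, Matrix.kroneckerMap_apply, Fintype.sum_prod_type,
    Matrix.one_apply]

lemma unitL_comm (M : Matrix n n R) :
    ((1 : Matrix Unit Unit R) ⊗ₖ M) * unitL R n = unitL R n * M := by
  ext p j
  obtain ⟨u, i⟩ := p
  simp [Matrix.mul_apply, unitL, Matrix.kroneckerMap_apply, Fintype.sum_prod_type,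
    Matrix.one_apply]

lemma counitL_comm (M : Matrix n n R) :
    counitL R n * ((1 : Matrix Unit Unit R) ⊗ₖ M) = M * counitL R n := by
  ext i p
  obtain ⟨u, j⟩ := p
  simp [Matrix.mul_apply, counitL, Matrix.kroneckerMap_apply, Fintype.sum_prod_type,
    Matrix.one_apply]

lemma counitR_unitR : counitR R n * unitR R n = 1 := by
  ext i j
  by_cases h : i = j <;>
    simp [Matrix.mul_apply, counitR, unitR, Fintype.sum_prod_type, Matrix.one_apply, h]

lemma unitR_counitR : unitR R n * counitR R n = 1 := by
  ext p q'
  obtain ⟨i, u⟩ := p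
  obtain ⟨j, v⟩ := q'
  simp [Matrix.mul_apply, counitR, unitR, Matrix.one_apply]

lemma counitL_unitL : counitL R n * unitL R n = 1 := by
  ext i j
  by_cases h : i = j <;>
    simp [Matrix.mul_apply, counitL, unitL, Fintype.sum_prod_type, Matrix.one_apply, h]

lemma unitL_counitL : unitL R n * counitL R n = 1 := by
  ext p q'
  obtain ⟨u, i⟩ := p
  obtain ⟨v, j⟩ := q'
  simp [Matrix.mul_apply, counitL, unitL, Matrix.one_apply]

lemma hatM_unitR : hatM (unitR PolyU n) = unitR F2 n := by
  ext p j; by_cases h : p.1 = j <;> simp [hatM, unitR, h]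

lemma hatM_counitR : hatM (counitR PolyU n) = counitR F2 n := by
  ext i p; by_cases h : i = p.1 <;> simp [hatM, counitR, h]

lemma hatM_unitL : hatM (unitL PolyU n) = unitL F2 n := by
  ext p j; by_cases h : p.2 = j <;> simp [hatM, unitL, h]

lemma hatM_counitL : hatM (counitL PolyU n) = counitL F2 n := by
  ext i p; by_cases h : i = p.2 <;> simp [hatM, counitL, h]

lemma mL_unitR : (unitR PolyU n).map toL = unitR Laur n := by
  ext p j; by_cases h : p.1 = j <;> simp [unitR, h, toL]

lemma mL_counitR : (counitR PolyU n).map toL = counitR Laur n := by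
  ext i p; by_cases h : i = p.1 <;> simp [counitR, h, toL]

lemma mL_unitL : (unitL PolyU n).map toL = unitL Laur n := by
  ext p j; by_cases h : p.2 = j <;> simp [unitL, h, toL]

lemma mL_counitL : (counitL PolyU n).map toL = counitL Laur n := by
  ext i p; by_cases h : i = p.2 <;> simp [counitL, h, toL]

lemma coeff_ite_one (c : Prop) [Decidable c] (k : ℕ)
    (h : ((if c then (1 : PolyU) else 0)).coeff k ≠ 0) : c ∧ k = 0 := by
  by_cases hc : c
  · refine ⟨hc, ?_⟩
    rw [if_pos hc, Polynomial.coeff_one] at h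
    by_contra h'
    rw [if_neg h'] at h; exact h rfl
  · rw [if_neg hc] at h; simp at h

lemma CO_dL : CO.C.dL = 0 := by
  show (0 : Matrix Unit Unit PolyU).map toL = 0; exact mL_zero

lemma iota_tensor_CO (Z : Hor) :
    (tensorHor Z CO).iota = Z.iota ⊗ₖ (1 : Matrix Unit Unit F2) := by
  show Z.iota ⊗ₖ CO.iota + (Z.C.PhiHat * Z.iota) ⊗ₖ (CO.iota * CO.C.PhiHat) = _
  rw [CO_PhiHat, Matrix.mul_zero, kronecker_zero, add_zero]; rfl

lemma iota_CO_tensor (X : Hor) :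
    (tensorHor CO X).iota = (1 : Matrix Unit Unit F2) ⊗ₖ X.iota := by
  show CO.iota ⊗ₖ X.iota + (CO.C.PhiHat * CO.iota) ⊗ₖ (X.iota * X.C.PhiHat) = _
  rw [CO_PhiHat, Matrix.zero_mul, zero_kronecker, add_zero]; rfl

lemma le_unitR (Z : Hor) : Le Z (tensorHor Z CO) := by
  refine ⟨unitR PolyU Z.C.idx, ?_, ?_, ⟨counitR Laur Z.C.idx, ?_, ?_, ?_⟩, ?_⟩
  · intro i' j k hk
    obtain ⟨i, u⟩ := i'
    obtain ⟨h, rfl⟩ := coeff_ite_one _ _ hk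
    subst h
    show Z.C.gr i + ((0 : ℤ), (0 : ℤ)) + _ = Z.C.gr i + ((0 : ℤ), (0 : ℤ))
    rw [Prod.ext_iff]
    constructor <;> simp
  · show unitR PolyU Z.C.idx * Z.C.d
      = (Z.C.d ⊗ₖ (1 : Matrix Unit Unit PolyU)
        + (1 : Matrix Z.C.idx Z.C.idx PolyU) ⊗ₖ (0 : Matrix Unit Unit PolyU))
        * unitR PolyU Z.C.idx
    rw [kronecker_zero, add_zero, unitR_comm]
  · show counitR Laur Z.C.idx
        * ((Z.C.d ⊗ₖ (1 : Matrix Unit Unit PolyU)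
          + (1 : Matrix Z.C.idx Z.C.idx PolyU) ⊗ₖ (0 : Matrix Unit Unit PolyU)).map toL)
      = Z.C.dL * counitR Laur Z.C.idx
    rw [kronecker_zero, add_zero, mL_kron, mL_one]
    exact counitR_comm _
  · exact Ht.of_eq (by
      show counitR Laur Z.C.idx * (unitR PolyU Z.C.idx).map toL = (1 : Matrix Z.C.idx Z.C.idx Laur)
      rw [mL_unitR, counitR_unitR])
  · exact Ht.of_eq (by
      show (unitR PolyU Z.C.idx).map toL * counitR Laur Z.C.idx
        = (1 : Matrix (Z.C.idx × Unit) (Z.C.idx × Unit) Laur)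
      rw [mL_unitR, unitR_counitR])
  · refine Ht.of_eq ?_
    rw [iota_tensor_CO]
    show (Z.iota ⊗ₖ (1 : Matrix Unit Unit F2)) * hatM (unitR PolyU Z.C.idx)
      = hatM (unitR PolyU Z.C.idx) * Z.iota
    rw [hatM_unitR, unitR_comm]

lemma le_counitR (Z : Hor) : Le (tensorHor Z CO) Z := by
  refine ⟨counitR PolyU Z.C.idx, ?_, ?_, ⟨unitR Laur Z.C.idx, ?_, ?_, ?_⟩, ?_⟩
  · intro i j' k hk
    obtain ⟨j, u⟩ := j'
    obtain ⟨h, rfl⟩ := coeff_ite_one _ _ hk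
    subst h
    show Z.C.gr i + _ = Z.C.gr i + ((0 : ℤ), (0 : ℤ)) + ((0 : ℤ), (0 : ℤ))
    rw [Prod.ext_iff]
    constructor <;> simp
  · show counitR PolyU Z.C.idx
        * (Z.C.d ⊗ₖ (1 : Matrix Unit Unit PolyU)
          + (1 : Matrix Z.C.idx Z.C.idx PolyU) ⊗ₖ (0 : Matrix Unit Unit PolyU))
      = Z.C.d * counitR PolyU Z.C.idx
    rw [kronecker_zero, add_zero, counitR_comm]
  · show unitR Laur Z.C.idx * Z.C.dL
      = ((Z.C.d ⊗ₖ (1 : Matrix Unit Unit PolyU)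
          + (1 : Matrix Z.C.idx Z.C.idx PolyU) ⊗ₖ (0 : Matrix Unit Unit PolyU)).map toL)
        * unitR Laur Z.C.idx
    rw [kronecker_zero, add_zero, mL_kron, mL_one]
    exact (unitR_comm _).symm
  · exact Ht.of_eq (by
      show unitR Laur Z.C.idx * (counitR PolyU Z.C.idx).map toL
        = (1 : Matrix (Z.C.idx × Unit) (Z.C.idx × Unit) Laur)
      rw [mL_counitR, unitR_counitR])
  · exact Ht.of_eq (by
      show (counitR PolyU Z.C.idx).map toL * unitR Laur Z.C.idx = (1 : Matrix Z.C.idx Z.C.idx Laur)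
      rw [mL_counitR, counitR_unitR])
  · refine Ht.of_eq ?_
    rw [iota_tensor_CO]
    show Z.iota * hatM (counitR PolyU Z.C.idx)
      = hatM (counitR PolyU Z.C.idx) * (Z.iota ⊗ₖ (1 : Matrix Unit Unit F2))
    rw [hatM_counitR, counitR_comm]

lemma le_unitL (X : Hor) : Le X (tensorHor CO X) := by
  refine ⟨unitL PolyU X.C.idx, ?_, ?_, ⟨counitL Laur X.C.idx, ?_, ?_, ?_⟩, ?_⟩
  · intro i' j k hk
    obtain ⟨u, i⟩ := i'
    obtain ⟨h, rfl⟩ := coeff_ite_one _ _ hk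
    subst h
    show ((0 : ℤ), (0 : ℤ)) + X.C.gr i + _ = X.C.gr i + ((0 : ℤ), (0 : ℤ))
    rw [Prod.ext_iff]
    constructor <;> simp
  · show unitL PolyU X.C.idx * X.C.d
      = ((0 : Matrix Unit Unit PolyU) ⊗ₖ (1 : Matrix X.C.idx X.C.idx PolyU)
        + (1 : Matrix Unit Unit PolyU) ⊗ₖ X.C.d) * unitL PolyU X.C.idx
    rw [zero_kronecker, zero_add, unitL_comm]
  · show counitL Laur X.C.idx
        * (((0 : Matrix Unit Unit PolyU) ⊗ₖ (1 : Matrix X.C.idx X.C.idx PolyU)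
          + (1 : Matrix Unit Unit PolyU) ⊗ₖ X.C.d).map toL)
      = X.C.dL * counitL Laur X.C.idx
    rw [zero_kronecker, zero_add, mL_kron, mL_one]
    exact counitL_comm _
  · exact Ht.of_eq (by
      show counitL Laur X.C.idx * (unitL PolyU X.C.idx).map toL = (1 : Matrix X.C.idx X.C.idx Laur)
      rw [mL_unitL, counitL_unitL])
  · exact Ht.of_eq (by
      show (unitL PolyU X.C.idx).map toL * counitL Laur X.C.idx
        = (1 : Matrix (Unit × X.C.idx) (Unit × X.C.idx) Laur)
      rw [mL_unitL, unitL_counitL])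
  · refine Ht.of_eq ?_
    rw [iota_CO_tensor]
    show ((1 : Matrix Unit Unit F2) ⊗ₖ X.iota) * hatM (unitL PolyU X.C.idx)
      = hatM (unitL PolyU X.C.idx) * X.iota
    rw [hatM_unitL, unitL_comm]

lemma le_counitL (X : Hor) : Le (tensorHor CO X) X := by
  refine ⟨counitL PolyU X.C.idx, ?_, ?_, ⟨unitL Laur X.C.idx, ?_, ?_, ?_⟩, ?_⟩
  · intro i j' k hk
    obtain ⟨u, j⟩ := j'
    obtain ⟨h, rfl⟩ := coeff_ite_one _ _ hk
    subst h
    show X.C.gr i + _ = ((0 : ℤ), (0 : ℤ)) + X.C.gr i + ((0 : ℤ), (0 : ℤ))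
    rw [Prod.ext_iff]
    constructor <;> simp
  · show counitL PolyU X.C.idx
        * ((0 : Matrix Unit Unit PolyU) ⊗ₖ (1 : Matrix X.C.idx X.C.idx PolyU)
          + (1 : Matrix Unit Unit PolyU) ⊗ₖ X.C.d)
      = X.C.d * counitL PolyU X.C.idx
    rw [zero_kronecker, zero_add, counitL_comm]
  · show unitL Laur X.C.idx * X.C.dL
      = (((0 : Matrix Unit Unit PolyU) ⊗ₖ (1 : Matrix X.C.idx X.C.idx PolyU)
          + (1 : Matrix Unit Unit PolyU) ⊗ₖ X.C.d).map toL) * unitL Laur X.C.idx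
    rw [zero_kronecker, zero_add, mL_kron, mL_one]
    exact (unitL_comm _).symm
  · exact Ht.of_eq (by
      show unitL Laur X.C.idx * (counitL PolyU X.C.idx).map toL
        = (1 : Matrix (Unit × X.C.idx) (Unit × X.C.idx) Laur)
      rw [mL_counitL, unitL_counitL])
  · exact Ht.of_eq (by
      show (counitL PolyU X.C.idx).map toL * unitL Laur X.C.idx = (1 : Matrix X.C.idx X.C.idx Laur)
      rw [mL_counitL, counitL_unitL])
  · refine Ht.of_eq ?_
    rw [iota_CO_tensor]
    show X.iota * hatM (counitL PolyU X.C.idx)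
      = hatM (counitL PolyU X.C.idx) * ((1 : Matrix Unit Unit F2) ⊗ₖ X.iota)
    rw [hatM_counitL, counitL_comm]

end KP
end Chunk4

section Chunk5
open Polynomial Matrix Kronecker
namespace KP

lemma CO_d_sq : CO.C.d * CO.C.d = 0 := by rw [CO_d, Matrix.mul_zero]

lemma step_up {X : Hor} (hXg : Good X) (hOX : Le CO X) (k : ℕ) :
    Le (tensorPow X k) (tensorPow X (k + 1)) := by
  obtain ⟨f, hf⟩ := hOX
  exact Le.trans (le_unitR (tensorPow X k))
    ⟨_, mono_second (tensorPow X k) (good_pow hXg k) hXg CO_d_sq hf⟩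

lemma step_down {X : Hor} (hXg : Good X) (hXO : Le X CO) (k : ℕ) :
    Le (tensorPow X (k + 1)) (tensorPow X k) := by
  obtain ⟨f, hf⟩ := hXO
  exact Le.trans
    ⟨_, mono_second (tensorPow X k) (good_pow hXg k) good_CO hXg.1 hf⟩
    (le_counitR (tensorPow X k))

lemma le_pow_asc {X : Hor} (step : ∀ k, Le (tensorPow X k) (tensorPow X (k + 1)))
    {j k : ℕ} (h : j ≤ k) : Le (tensorPow X j) (tensorPow X k) := by
  induction h with
  | refl => exact Le.refl _
  | step _ ih => exact Le.trans ih (step _)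

lemma le_pow_desc {X : Hor} (step : ∀ k, Le (tensorPow X (k + 1)) (tensorPow X k))
    {j k : ℕ} (h : j ≤ k) : Le (tensorPow X k) (tensorPow X j) := by
  induction h with
  | refl => exact Le.refl _
  | step _ ih => exact Le.trans (step _) ih


lemma CE_dHat : CE.C.dHat = 0 := by
  ext i j
  fin_cases i <;> fin_cases j <;>
    simp [CxData.dHat, hatM, CE, Matrix.vecHead, Matrix.vecTail] <;> rfl

lemma notLeCOCE' : ¬ Le CO CE := by
  rintro ⟨f, hg, hc, ⟨g, hgc, hgf, hfg⟩, K, hK⟩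
  -- the chain-map condition kills the `a`-coordinate
  have hc' : CE.C.d * f = 0 := by rw [← hc, CO_d, Matrix.mul_zero]
  have h0 : f (0 : Fin 5) () = 0 := by
    have h2 := congrFun (congrFun hc' (1 : Fin 5)) ()
    have h2' : ∑ j : Fin 5, CE.C.d (1 : Fin 5) j * f j () = 0 := h2
    simpa [Fin.sum_univ_five, CE] using h2'
  -- gradings kill coordinates b, c, d
  have h1 : f (1 : Fin 5) () = 0 := by
    ext k
    rw [Polynomial.coeff_zero]
    by_contra hne
    have h5 := hg (1 : Fin 5) () k hne
    rw [Prod.ext_iff] at h5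
    simp [CE, CO, Prod.fst_add, Prod.snd_add, Matrix.vecHead, Matrix.vecTail] at h5
    omega
  have h2 : f (2 : Fin 5) () = 0 := by
    ext k
    rw [Polynomial.coeff_zero]
    by_contra hne
    have h5 := hg (2 : Fin 5) () k hne
    rw [Prod.ext_iff] at h5
    simp [CE, CO, Prod.fst_add, Prod.snd_add, Matrix.vecHead, Matrix.vecTail] at h5
    omega
  have h3 : f (3 : Fin 5) () = 0 := by
    ext k
    rw [Polynomial.coeff_zero]
    by_contra hne
    have h5 := hg (3 : Fin 5) () k hne
    rw [Prod.ext_iff] at h5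
    simp [CE, CO, Prod.fst_add, Prod.snd_add, Matrix.vecHead, Matrix.vecTail] at h5
    omega
  -- the involution condition kills x
  rw [CE_dHat, CO_dHat, Matrix.zero_mul, Matrix.mul_zero, add_zero,
    show CO.iota = 1 from rfl, Matrix.mul_one] at hK
  have hIota : CE.iota * hatM f = hatM f := cancel2 hK
  have h4c : (f (4 : Fin 5) ()).coeff 0 = 0 := by
    have h5 := congrFun (congrFun hIota (3 : Fin 5)) ()
    have h5' : ∑ j : Fin 5, CE.iota (3 : Fin 5) j * hatM f j () = hatM f (3 : Fin 5) () := h5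
    simpa [Fin.sum_univ_five, CE, hatM] using h5'
  have h4 : f (4 : Fin 5) () = 0 := by
    ext k
    rw [Polynomial.coeff_zero]
    by_cases hk : k = 0
    · subst hk; exact h4c
    · by_contra hne
      have h5 := hg (4 : Fin 5) () k hne
      rw [Prod.ext_iff] at h5
      simp [CE, CO, Prod.fst_add, Prod.snd_add, Matrix.vecHead, Matrix.vecTail] at h5
      omega
  have hf0 : f = 0 := by
    refine Matrix.ext fun i u => ?_
    cases u
    show f i () = (0 : PolyU)
    fin_cases i
    exacts [h0, h1, h2, h3, h4]
  -- contradiction with the localized homotopy equivalence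
  obtain ⟨H, hH⟩ := hgf
  rw [CO_dL, Matrix.zero_mul, Matrix.mul_zero, add_zero] at hH
  have hone : g * f.map toL = 1 := cancel2 hH
  rw [hf0] at hone
  rw [mL_zero, Matrix.mul_zero] at hone
  have : (0 : Laur) = (1 : Matrix Unit Unit Laur) () () := congrFun (congrFun hone ()) ()
  simp [Matrix.one_apply, Matrix.zero_apply] at this

lemma notLeCECO' : ¬ Le CE CO := by
  rintro ⟨f, hg, hc, ⟨g, hgc, hgf, hfg⟩, K, hK⟩
  have h1 : f () (1 : Fin 5) = 0 := by
    ext k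
    rw [Polynomial.coeff_zero]
    by_contra hne
    have h5 := hg () (1 : Fin 5) k hne
    rw [Prod.ext_iff] at h5
    simp [CE, CO, Prod.fst_add, Prod.snd_add, Matrix.vecHead, Matrix.vecTail] at h5
    omega
  have h2 : f () (2 : Fin 5) = 0 := by
    ext k
    rw [Polynomial.coeff_zero]
    by_contra hne
    have h5 := hg () (2 : Fin 5) k hne
    rw [Prod.ext_iff] at h5
    simp [CE, CO, Prod.fst_add, Prod.snd_add, Matrix.vecHead, Matrix.vecTail] at h5
    omega
  have h3 : f () (3 : Fin 5) = 0 := by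
    ext k
    rw [Polynomial.coeff_zero]
    by_contra hne
    have h5 := hg () (3 : Fin 5) k hne
    rw [Prod.ext_iff] at h5
    simp [CE, CO, Prod.fst_add, Prod.snd_add, Matrix.vecHead, Matrix.vecTail] at h5
    omega
  -- involution condition kills x
  rw [CE_dHat, CO_dHat, Matrix.zero_mul, Matrix.mul_zero, zero_add,
    show CO.iota = 1 from rfl, Matrix.one_mul] at hK
  have hIota : hatM f = hatM f * CE.iota := cancel2 hK
  have h4c : (f () (4 : Fin 5)).coeff 0 = 0 := by
    have h5 := congrFun (congrFun hIota ()) (0 : Fin 5)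
    have h5' : hatM f () (0 : Fin 5) = ∑ j : Fin 5, hatM f () j * CE.iota j (0 : Fin 5) := h5
    simpa [Fin.sum_univ_five, CE, hatM] using h5'
  have h4 : f () (4 : Fin 5) = 0 := by
    ext k
    rw [Polynomial.coeff_zero]
    by_cases hk : k = 0
    · subst hk; exact h4c
    · by_contra hne
      have h5 := hg () (4 : Fin 5) k hne
      rw [Prod.ext_iff] at h5
      simp [CE, CO, Prod.fst_add, Prod.snd_add, Matrix.vecHead, Matrix.vecTail] at h5
      omega
  -- the localized chain-map condition kills g at the `a`-coordinate
  have hdg : CE.C.dL * g = 0 := by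
    rw [← hgc, CO_dL, Matrix.mul_zero]
  have hga : g (0 : Fin 5) () = 0 := by
    have h5 := congrFun (congrFun hdg (1 : Fin 5)) ()
    have h6 : ∑ j : Fin 5, CE.C.dL (1 : Fin 5) j * g j () = 0 := h5
    rw [Fin.sum_univ_five] at h6
    have e0 : CE.C.dL (1 : Fin 5) (0 : Fin 5) = LaurentPolynomial.T 1 := by
      simp [CxData.dL, CE, toL]
    have e1 : CE.C.dL (1 : Fin 5) (1 : Fin 5) = 0 := by
      simp [CxData.dL, CE, toL, Matrix.vecHead, Matrix.vecTail]
    have e2 : CE.C.dL (1 : Fin 5) (2 : Fin 5) = 0 := by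
      simp [CxData.dL, CE, toL, Matrix.vecHead, Matrix.vecTail]
    have e3 : CE.C.dL (1 : Fin 5) (3 : Fin 5) = 0 := by
      simp [CxData.dL, CE, toL, Matrix.vecHead, Matrix.vecTail]
    have e4 : CE.C.dL (1 : Fin 5) (4 : Fin 5) = 0 := by
      simp [CxData.dL, CE, toL, Matrix.vecHead, Matrix.vecTail]
    rw [e0, e1, e2, e3, e4] at h6
    simp only [zero_mul, add_zero] at h6
    have h7 := congrArg (fun x => LaurentPolynomial.T (-1) * x) h6
    simp only [mul_zero, ← mul_assoc] at h7
    rwa [← LaurentPolynomial.T_add, neg_add_cancel, LaurentPolynomial.T_zero, one_mul] at h7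
  -- contradiction
  obtain ⟨H, hH⟩ := hfg
  rw [CO_dL, Matrix.zero_mul, Matrix.mul_zero, add_zero] at hH
  have hone : f.map toL * g = 1 := cancel2 hH
  have h5 := congrFun (congrFun hone ()) ()
  have h6 : ∑ j : Fin 5, toL (f () j) * g j () = (1 : Matrix Unit Unit Laur) () () := h5
  rw [Matrix.one_apply_eq] at h6
  rw [Fin.sum_univ_five] at h6
  rw [h1, h2, h3, h4, hga] at h6
  simp at h6

lemma notLeCOCE : ¬ Le CO CE := notLeCOCE'

lemma notLeCECO : ¬ Le CE CO := notLeCECO'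

end KP
end Chunk5

/-- Corollary 2.15.  If a class `[C] ∈ 𝔗^U_K` is comparable
with respect to `≤` both to `[C_O]` and to `[C_E]`, then `[C]` has infinite
order in `𝔗^U_K`: no positive tensor power of `C` is almost `ι_K`-locally
equivalent to `C_O`. -/
theorem infinite_order_of_comparable (X : Hor) (hX : IsHorizontal X)
    (hO : Le X CO ∨ Le CO X) (hE : Le X CE ∨ Le CE X) :
    ∀ n : ℕ, 0 < n → ¬ AlmostLocalEquiv (tensorPow X n) CO := by
  intro n hn hEquiv
  obtain ⟨hup, hdown⟩ := hEquiv
  have hXg : KP.Good X := KP.good_X hX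
  have h1X : Le X (tensorPow X 1) := KP.le_unitL X
  have hX1 : Le (tensorPow X 1) X := KP.le_counitL X
  have key : Le X CO ∧ Le CO X := by
    rcases hO with hXO | hOX
    · have hdesc : Le (tensorPow X n) (tensorPow X 1) :=
        KP.le_pow_desc (KP.step_down hXg hXO) hn
      exact ⟨hXO, KP.Le.trans hdown (KP.Le.trans hdesc hX1)⟩
    · have hasc : Le (tensorPow X 1) (tensorPow X n) :=
        KP.le_pow_asc (KP.step_up hXg hOX) hn
      exact ⟨KP.Le.trans h1X (KP.Le.trans hasc hup), hOX⟩
  rcases hE with h | h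
  · exact KP.notLeCOCE (KP.Le.trans key.2 h)
  · exact KP.notLeCECO (KP.Le.trans h key.1)

end
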